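/- Let V be a finite-dimensional real normed vector space and T > 0. Let A₁, A₂ : [0,T] → End(V) be continuous, ξ : [0,T] → V continuous, and φ : V → ℝ linear. Then there exists ε ∈ (0,T] such that for every t₀ ∈ (0,ε], the only twice continuously differentiable J : [0,t₀] → V satisfying J''(t) + A₁(t)(J(t)) + A₂(t)(J'(t)) + φ(J'(0))·ξ(t) = 0 for all t ∈ [0,t₀], together with J(0) = 0 and J(t₀) = 0, is J ≡ 0. -/
import Mathlib


set_option maxHeartbeats 800000 in
/-- **Proposition `propisolatedinstant` (in a parallel frame).** Let `V` be a
finite-dimensional real normed vector space, `T > 0`, `A₁, A₂ : [0,T] → End(V)`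
continuous, `ξ : [0,T] → V` continuous and `φ : V → ℝ` linear. Then there is
`ε ∈ (0,T]` such that for every `t₀ ∈ (0,ε]` the only twice continuously differentiable
solution `J : [0,t₀] → V` of `J'' + A₁ t (J t) + A₂ t (J' t) + φ(J'(0)) • ξ t = 0`
vanishing at both `t = 0` and `t = t₀` is `J ≡ 0`. -/
theorem no_conjugate_instant_near_zero
    (V : Type*) [NormedAddCommGroup V] [NormedSpace ℝ V] [FiniteDimensional ℝ V]
    (T : ℝ) (hT : 0 < T)
    (A₁ A₂ : ℝ → (V →L[ℝ] V))
    (hA₁ : ContinuousOn A₁ (Set.Icc 0 T)) (hA₂ : ContinuousOn A₂ (Set.Icc 0 T))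
    (ξ : ℝ → V) (hξ : ContinuousOn ξ (Set.Icc 0 T))
    (φ : V →ₗ[ℝ] ℝ) :
    ∃ ε : ℝ, 0 < ε ∧ ε ≤ T ∧
      ∀ t₀ : ℝ, 0 < t₀ → t₀ ≤ ε →
        ∀ J J' J'' : ℝ → V,
          (∀ t ∈ Set.Icc (0:ℝ) t₀, HasDerivWithinAt J (J' t) (Set.Icc 0 t₀) t) →
          (∀ t ∈ Set.Icc (0:ℝ) t₀, HasDerivWithinAt J' (J'' t) (Set.Icc 0 t₀) t) →
          ContinuousOn J'' (Set.Icc 0 t₀) →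
          (∀ t ∈ Set.Icc (0:ℝ) t₀,
            J'' t + A₁ t (J t) + A₂ t (J' t) + φ (J' 0) • ξ t = 0) →
          J 0 = 0 → J t₀ = 0 →
          ∀ t ∈ Set.Icc (0:ℝ) t₀, J t = 0 := by
  classical
  set Φ : V →L[ℝ] ℝ := LinearMap.toContinuousLinearMap φ with hΦdef
  have hΦeq : ∀ v : V, φ v = Φ v := fun v => rfl
  obtain ⟨M₁, hM₁⟩ := (isCompact_Icc : IsCompact (Set.Icc (0:ℝ) T)).exists_bound_of_continuousOn hA₁
  obtain ⟨M₂, hM₂⟩ := (isCompact_Icc : IsCompact (Set.Icc (0:ℝ) T)).exists_bound_of_continuousOn hA₂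
  obtain ⟨M₃, hM₃⟩ := (isCompact_Icc : IsCompact (Set.Icc (0:ℝ) T)).exists_bound_of_continuousOn hξ
  set M : ℝ := max (max M₁ M₂) M₃ with hMdef
  have h0T : (0:ℝ) ∈ Set.Icc (0:ℝ) T := ⟨le_refl _, hT.le⟩
  have hM0 : 0 ≤ M := le_trans (norm_nonneg (A₁ 0))
    (le_trans (hM₁ 0 h0T) (le_trans (le_max_left _ _) (le_max_left _ _)))
  have hMA₁ : ∀ t ∈ Set.Icc (0:ℝ) T, ‖A₁ t‖ ≤ M := fun t ht =>
    le_trans (hM₁ t ht) (le_trans (le_max_left _ _) (le_max_left _ _))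
  have hMA₂ : ∀ t ∈ Set.Icc (0:ℝ) T, ‖A₂ t‖ ≤ M := fun t ht =>
    le_trans (hM₂ t ht) (le_trans (le_max_right _ _) (le_max_left _ _))
  have hMξ : ∀ t ∈ Set.Icc (0:ℝ) T, ‖ξ t‖ ≤ M := fun t ht =>
    le_trans (hM₃ t ht) (le_max_right _ _)
  set C : ℝ := ‖Φ‖ with hCdef
  have hC0 : 0 ≤ C := norm_nonneg _
  set K : ℝ := 2 * M + C * M with hKdef
  have hK0 : 0 ≤ K := by positivity
  set ε : ℝ := min T (min 1 (1 / (2 * K + 1))) with hεdef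
  have hε0 : 0 < ε := by
    refine lt_min hT (lt_min one_pos ?_)
    positivity
  have hεT : ε ≤ T := min_le_left _ _
  have hε1 : ε ≤ 1 := le_trans (min_le_right _ _) (min_le_left _ _)
  have hεK : 2 * ε * K < 1 := by
    have h1 : ε ≤ 1 / (2 * K + 1) := le_trans (min_le_right _ _) (min_le_right _ _)
    have h2 : (0:ℝ) < 2 * K + 1 := by positivity
    rw [le_div_iff₀ h2] at h1
    nlinarith
  refine ⟨ε, hε0, hεT, ?_⟩
  intro t₀ ht₀ ht₀ε J J' J'' hJ hJ' hJ''c hODE hJ0 hJt₀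
  have hsub : Set.Icc (0:ℝ) t₀ ⊆ Set.Icc (0:ℝ) T :=
    Set.Icc_subset_Icc le_rfl (ht₀ε.trans hεT)
  have ht₀1 : t₀ ≤ 1 := ht₀ε.trans hε1
  have h0mem : (0:ℝ) ∈ Set.Icc (0:ℝ) t₀ := ⟨le_refl _, ht₀.le⟩
  have ht₀mem : t₀ ∈ Set.Icc (0:ℝ) t₀ := ⟨ht₀.le, le_refl _⟩
  have hconv : Convex ℝ (Set.Icc (0:ℝ) t₀) := convex_Icc _ _
  have hJ'c : ContinuousOn J' (Set.Icc 0 t₀) := fun t ht =>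
    (hJ' t ht).continuousWithinAt
  -- maximum of ‖J'‖
  obtain ⟨s, hs, hsmax⟩ :=
    (isCompact_Icc : IsCompact (Set.Icc (0:ℝ) t₀)).exists_isMaxOn
      ⟨0, h0mem⟩ (hJ'c.norm)
  set N : ℝ := ‖J' s‖ with hNdef
  have hN0 : 0 ≤ N := norm_nonneg _
  have hNmax : ∀ t ∈ Set.Icc (0:ℝ) t₀, ‖J' t‖ ≤ N := fun t ht => hsmax ht
  -- bound on J
  have hJb : ∀ t ∈ Set.Icc (0:ℝ) t₀, ‖J t‖ ≤ N := by
    intro t ht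
    have h := Convex.norm_image_sub_le_of_norm_hasDerivWithin_le hJ hNmax hconv h0mem ht
    rw [hJ0, sub_zero, sub_zero] at h
    have ht' : ‖t‖ ≤ 1 := by
      rw [Real.norm_eq_abs, abs_of_nonneg ht.1]
      exact le_trans ht.2 ht₀1
    nlinarith [norm_nonneg t]
  -- bound on J''
  have hJ''b : ∀ t ∈ Set.Icc (0:ℝ) t₀, ‖J'' t‖ ≤ K * N := by
    intro t ht
    have h := hODE t ht
    have h2 : J'' t = -(A₁ t (J t) + A₂ t (J' t) + φ (J' 0) • ξ t) := by
      rw [eq_neg_iff_add_eq_zero, ← h]; abel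
    have htT : t ∈ Set.Icc (0:ℝ) T := hsub ht
    have e1 : ‖A₁ t (J t)‖ ≤ M * N := by
      calc ‖A₁ t (J t)‖ ≤ ‖A₁ t‖ * ‖J t‖ := (A₁ t).le_opNorm _
        _ ≤ M * N := by
            apply mul_le_mul (hMA₁ t htT) (hJb t ht) (norm_nonneg _) hM0
    have e2 : ‖A₂ t (J' t)‖ ≤ M * N := by
      calc ‖A₂ t (J' t)‖ ≤ ‖A₂ t‖ * ‖J' t‖ := (A₂ t).le_opNorm _
        _ ≤ M * N := by
            apply mul_le_mul (hMA₂ t htT) (hNmax t ht) (norm_nonneg _) hM0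
    have e3 : ‖φ (J' 0) • ξ t‖ ≤ C * N * M := by
      rw [norm_smul, hΦeq]
      have h1 : ‖Φ (J' 0)‖ ≤ C * N :=
        le_trans (Φ.le_opNorm _) (by
          apply mul_le_mul_of_nonneg_left (hNmax 0 h0mem) hC0)
      calc ‖Φ (J' 0)‖ * ‖ξ t‖ ≤ (C * N) * M := by
            apply mul_le_mul h1 (hMξ t htT) (norm_nonneg _) (by positivity)
        _ = C * N * M := rfl
    calc ‖J'' t‖ = ‖A₁ t (J t) + A₂ t (J' t) + φ (J' 0) • ξ t‖ := by rw [h2, norm_neg]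
      _ ≤ ‖A₁ t (J t)‖ + ‖A₂ t (J' t)‖ + ‖φ (J' 0) • ξ t‖ := norm_add₃_le
      _ ≤ M * N + M * N + C * N * M := by
          exact add_le_add (add_le_add e1 e2) e3
      _ = K * N := by rw [hKdef]; ring
  -- bound on J' t - J' 0
  have hJ'diff : ∀ t ∈ Set.Icc (0:ℝ) t₀, ‖J' t - J' 0‖ ≤ K * N * t₀ := by
    intro t ht
    have h := Convex.norm_image_sub_le_of_norm_hasDerivWithin_le hJ' hJ''b hconv h0mem ht
    rw [sub_zero] at h
    refine le_trans h ?_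
    have ht' : ‖t‖ ≤ t₀ := by
      rw [Real.norm_eq_abs, abs_of_nonneg ht.1]; exact ht.2
    exact mul_le_mul_of_nonneg_left ht' (by positivity)
  -- bound on J' 0 using both endpoint conditions
  have hJ'0 : ‖J' 0‖ ≤ K * N * t₀ := by
    have hg : ∀ t ∈ Set.Icc (0:ℝ) t₀,
        HasDerivWithinAt (fun u => J u - u • J' 0) (J' t - J' 0) (Set.Icc 0 t₀) t := by
      intro t ht
      exact (hJ t ht).sub
        (by simpa using ((hasDerivAt_id t).smul_const (J' 0)).hasDerivWithinAt)
    have h := Convex.norm_image_sub_le_of_norm_hasDerivWithin_le hg hJ'diff hconv h0mem ht₀mem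
    simp only [hJ0, hJt₀, zero_sub, zero_smul, sub_zero] at h
    rw [norm_neg, norm_smul, Real.norm_eq_abs, abs_of_nonneg ht₀.le] at h
    have h' : t₀ * ‖J' 0‖ ≤ K * N * t₀ * t₀ := h
    have := mul_le_mul_of_nonneg_left h' (le_of_lt (inv_pos.2 ht₀))
    rw [← mul_assoc, inv_mul_cancel₀ ht₀.ne', one_mul] at this
    calc ‖J' 0‖ ≤ t₀⁻¹ * (K * N * t₀ * t₀) := this
      _ = K * N * t₀ := by field_simp
  -- conclude N = 0
  have hNle : N ≤ 2 * K * N * t₀ := by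
    calc N = ‖J' s‖ := rfl
      _ ≤ ‖J' 0‖ + ‖J' s - J' 0‖ := by
          simpa using norm_add_le (J' 0) (J' s - J' 0)
      _ ≤ K * N * t₀ + K * N * t₀ := add_le_add hJ'0 (hJ'diff s hs)
      _ = 2 * K * N * t₀ := by ring
  have hNzero : N = 0 := by
    by_contra hne
    have hNpos : 0 < N := lt_of_le_of_ne hN0 (Ne.symm hne)
    have h1 : 2 * K * N * t₀ ≤ 2 * K * N * ε :=
      mul_le_mul_of_nonneg_left ht₀ε (by positivity)
    nlinarith
  intro t ht
  have := hJb t ht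
  rw [hNzero] at this
  exact norm_le_zero_iff.1 this
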